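/- Let H be a (not necessarily reduced) hypersurface defined in a neighborhood of 0 in ℂⁿ and containing 0, and let f : Δ → ℂⁿ be a holomorphic map from a disk with f(0) = 0 such that f*H is well-defined (f does not map Δ into H). Then mult₀(H) ≤ mult₀(f*H), and equality holds if and only if the image f₊(T₀Δ) of the tangent space is not contained in the tangent cone of H at 0. -/

import Mathlib

open Filter Asymptotics Topology

/-- Key limit: if `g` has power series `p` at `0` with `p i = 0` for `i < m`, and `f` is
analytic at `0` with `f 0 = 0`, then `g (f t) / t ^ m → p m (deriv f 0, …, deriv f 0)`. -/
lemma tendsto_comp_div_pow {E : Type*} [NormedAddCommGroup E] [NormedSpace ℂ E]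
    {g : E → ℂ} {p : FormalMultilinearSeries ℂ E ℂ} (hg : HasFPowerSeriesAt g p 0)
    {f : ℂ → E} (hf : AnalyticAt ℂ f 0) (hf0 : f 0 = 0) {m : ℕ}
    (hm : ∀ i < m, p i = 0) :
    Tendsto (fun t : ℂ => g (f t) / t ^ m) (𝓝[≠] (0 : ℂ))
      (𝓝 (p m (fun _ => deriv f 0))) := by
  -- Taylor remainder estimate
  have hbig : (fun y : E => g y - p m (fun _ => y)) =O[𝓝 0] fun y => ‖y‖ ^ (m + 1) := by
    have h := hg.isBigO_sub_partialSum_pow (m + 1)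
    have hps : ∀ y : E, p.partialSum (m + 1) y = p m (fun _ => y) := by
      intro y
      rw [FormalMultilinearSeries.partialSum, Finset.sum_eq_single m]
      · intro b hb hbm
        have : b < m := lt_of_le_of_ne (Nat.lt_succ_iff.mp (Finset.mem_range.mp hb)) hbm
        simp [hm b this]
      · intro h'; exact absurd (Finset.mem_range.mpr (Nat.lt_succ_self m)) h'
    simpa [hps] using h
  have hft : Tendsto f (𝓝 0) (𝓝 0) := by
    simpa [hf0] using hf.continuousAt.tendsto
  have h2 : (fun t : ℂ => g (f t) - p m (fun _ => f t)) =O[𝓝 0]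
      fun t => ‖f t‖ ^ (m + 1) := hbig.comp_tendsto hft
  have hfd : DifferentiableAt ℂ f 0 := hf.differentiableAt
  have hfO : f =O[𝓝 0] fun t : ℂ => t := by
    simpa [hf0] using hfd.hasFDerivAt.isBigO_sub
  have h3 : (fun t : ℂ => g (f t) - p m (fun _ => f t)) =O[𝓝 0]
      fun t => ‖t‖ ^ (m + 1) := h2.trans (hfO.norm_norm.pow (m + 1))
  have hlo : (fun t : ℂ => ‖t‖ ^ (m + 1)) =o[𝓝 0] fun t : ℂ => t ^ m := by
    have h1 : (fun t : ℂ => ‖t‖) =o[𝓝 0] fun _ : ℂ => (1 : ℝ) := by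
      rw [isLittleO_one_iff]
      simpa using (continuous_norm.tendsto (0 : ℂ))
    have := h1.mul_isBigO (isBigO_refl (fun t : ℂ => ‖t‖ ^ m) (𝓝 0))
    calc (fun t : ℂ => ‖t‖ ^ (m + 1)) =o[𝓝 0] fun t : ℂ => 1 * ‖t‖ ^ m := by
          simpa [pow_succ, mul_comm] using this
      _ =O[𝓝 0] fun t : ℂ => t ^ m := by
          simp only [one_mul]
          apply IsBigO.of_bound 1
          filter_upwards with t
          simp [norm_pow]
  have hsmall : (fun t : ℂ => g (f t) - p m (fun _ => f t)) =o[𝓝 0]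
      fun t : ℂ => t ^ m := h3.trans_isLittleO hlo
  have htend0 : Tendsto (fun t : ℂ => (g (f t) - p m (fun _ => f t)) / t ^ m)
      (𝓝 0) (𝓝 0) := hsmall.tendsto_div_nhds_zero
  -- main term
  have hd : HasDerivAt f (deriv f 0) 0 := hfd.hasDerivAt
  have hslope : Tendsto (fun t : ℂ => t⁻¹ • f t) (𝓝[≠] (0 : ℂ)) (𝓝 (deriv f 0)) := by
    have := hasDerivAt_iff_tendsto_slope.mp hd
    apply this.congr
    intro t
    simp [slope, hf0, vsub_eq_sub]
  have hcont : Continuous fun v : E => p m (fun _ => v) :=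
    (p m).cont.comp (continuous_pi fun _ => continuous_id)
  have htend1 : Tendsto (fun t : ℂ => p m (fun _ => t⁻¹ • f t)) (𝓝[≠] (0 : ℂ))
      (𝓝 (p m (fun _ => deriv f 0))) :=
    (hcont.tendsto (deriv f 0)).comp hslope
  have hsum := htend1.add (htend0.mono_left nhdsWithin_le_nhds)
  rw [add_zero] at hsum
  apply hsum.congr'
  filter_upwards [self_mem_nhdsWithin] with t (ht : t ≠ 0)
  have hmap : p m (fun _ => t⁻¹ • f t) = (t⁻¹) ^ m • p m (fun _ => f t) := by
    rw [show (fun _ : Fin m => t⁻¹ • f t) = fun i : Fin m => (fun _ : Fin m => t⁻¹) i • f t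
      from rfl, (p m).map_smul_univ]
    simp
  rw [hmap]
  have htm : (t : ℂ) ^ m ≠ 0 := pow_ne_zero _ ht
  field_simp
  rw [smul_eq_mul, one_div, inv_pow, mul_right_comm, inv_mul_cancel₀ htm, one_mul]
  ring

theorem mult_le_mult_pullback_and_eq_iff_tangent
    (n : ℕ) (g : (Fin n → ℂ) → ℂ) (p : FormalMultilinearSeries ℂ (Fin n → ℂ) ℂ)
    (hg : HasFPowerSeriesAt g p 0) (hg0 : g 0 = 0) (hp : p ≠ 0)
    (f : ℂ → (Fin n → ℂ)) (hf : AnalyticAt ℂ f 0) (hf0 : f 0 = 0)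
    (q : FormalMultilinearSeries ℂ ℂ ℂ)
    (hq : HasFPowerSeriesAt (g ∘ f) q 0) (hq0 : q ≠ 0) :
    p.order ≤ q.order ∧
      (p.order = q.order ↔
        ∃ c : ℂ, p p.order (fun _ => c • deriv f 0) ≠ 0) := by
  set m := p.order with hm
  set k := q.order with hk
  set L := p m (fun _ => deriv f 0) with hL
  have hA : Tendsto (fun t : ℂ => g (f t) / t ^ m) (𝓝[≠] (0 : ℂ)) (𝓝 L) :=
    tendsto_comp_div_pow hg hf hf0
      (fun i hi => p.apply_eq_zero_of_lt_order hi)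
  have hB : Tendsto (fun t : ℂ => g (f t) / t ^ k) (𝓝[≠] (0 : ℂ)) (𝓝 (q.coeff k)) := by
    have := tendsto_comp_div_pow hq (analyticAt_id) rfl
      (fun i hi => q.apply_eq_zero_of_lt_order hi)
    simp only [Function.comp, id] at this ⊢
    have hcoeff : q k (fun _ => deriv (id : ℂ → ℂ) 0) = q.coeff k := by
      simp only [deriv_id]
      rfl
    rwa [hcoeff] at this
  have hc : q.coeff k ≠ 0 := by
    rw [FormalMultilinearSeries.coeff_eq_zero.ne]
    exact q.apply_order_ne_zero hq0
  have hNe : (𝓝[≠] (0 : ℂ)).NeBot := by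
    exact Module.punctured_nhds_neBot ℂ ℂ 0
  -- m ≤ k
  have hmk : m ≤ k := by
    by_contra hlt
    push_neg at hlt
    have : Tendsto (fun t : ℂ => g (f t) / t ^ k) (𝓝[≠] (0 : ℂ)) (𝓝 (L * 0)) := by
      have hz : Tendsto (fun t : ℂ => t ^ (m - k)) (𝓝[≠] (0 : ℂ)) (𝓝 0) := by
        have : Tendsto (fun t : ℂ => t ^ (m - k)) (𝓝 (0 : ℂ)) (𝓝 (0 ^ (m - k))) :=
          (continuous_pow (m - k)).tendsto 0
        rw [zero_pow (by omega)] at this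
        exact this.mono_left nhdsWithin_le_nhds
      apply (hA.mul hz).congr'
      filter_upwards [self_mem_nhdsWithin] with t (ht : t ≠ 0)
      rw [div_mul_eq_mul_div, div_eq_div_iff (pow_ne_zero _ ht) (pow_ne_zero _ ht),
        mul_assoc, ← pow_add]
      congr 2
      omega
    have := tendsto_nhds_unique hB this
    rw [mul_zero] at this
    exact hc this
  -- k = m → L = q.coeff k ≠ 0 ; k > m → L = 0
  have hiff : m = k ↔ L ≠ 0 := by
    constructor
    · intro hmk'
      have : L = q.coeff k := by
        apply tendsto_nhds_unique hA
        rw [hmk']; exact hB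
      rw [this]; exact hc
    · intro hLne
      by_contra hne
      have hlt : m < k := lt_of_le_of_ne hmk hne
      have : Tendsto (fun t : ℂ => g (f t) / t ^ m) (𝓝[≠] (0 : ℂ)) (𝓝 (q.coeff k * 0)) := by
        have hz : Tendsto (fun t : ℂ => t ^ (k - m)) (𝓝[≠] (0 : ℂ)) (𝓝 0) := by
          have : Tendsto (fun t : ℂ => t ^ (k - m)) (𝓝 (0 : ℂ)) (𝓝 (0 ^ (k - m))) :=
            (continuous_pow (k - m)).tendsto 0
          rw [zero_pow (by omega)] at this
          exact this.mono_left nhdsWithin_le_nhds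
        apply (hB.mul hz).congr'
        filter_upwards [self_mem_nhdsWithin] with t (ht : t ≠ 0)
        rw [div_mul_eq_mul_div, div_eq_div_iff (pow_ne_zero _ ht) (pow_ne_zero _ ht),
          mul_assoc, ← pow_add]
        congr 2
        omega
      have := tendsto_nhds_unique hA this
      rw [mul_zero] at this
      exact hLne this
  refine ⟨hmk, hiff.trans ?_⟩
  constructor
  · intro hLne
    exact ⟨1, by simpa using hLne⟩
  · rintro ⟨c, hcne⟩
    intro hL0
    apply hcne
    have : p m (fun _ => c • deriv f 0) = c ^ m • L := by
      rw [show (fun _ : Fin m => c • deriv f 0) =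
        fun i : Fin m => (fun _ : Fin m => c) i • deriv f 0 from rfl, (p m).map_smul_univ]
      simp [hL]
    rw [this, hL0, smul_zero]
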